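/- Let W1 and W2 be B-DMCs with finite output alphabets Y1 and Y2, and let (W⁻, W⁺) be their irregular kernel transform. Then I(W⁻) + I(W⁺) = I(W1) + I(W2). -/
import Mathlib


open Finset Real

/-- A binary-input discrete memoryless channel (B-DMC): nonnegative entries
and each row (fixed input) sums to 1. -/
def IsBDMC {Y : Type*} [Fintype Y] (W : Y → ZMod 2 → ℝ) : Prop :=
  (∀ y x, 0 ≤ W y x) ∧ (∀ x, ∑ y, W y x = 1)

/-- Symmetric capacity I(W). -/
noncomputable def symCap {Y : Type*} [Fintype Y] (W : Y → ZMod 2 → ℝ) : ℝ :=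
  ∑ y, ∑ x : ZMod 2,
    (1 / 2) * W y x * Real.logb 2 (W y x / ((1 / 2) * (W y 0 + W y 1)))

/-- The minus-channel W⁻ of the irregular kernel transform. -/
noncomputable def Wminus {Y1 Y2 : Type*} (W1 : Y1 → ZMod 2 → ℝ)
    (W2 : Y2 → ZMod 2 → ℝ) : Y1 × Y2 → ZMod 2 → ℝ :=
  fun y u1 => ∑ u2 : ZMod 2, (1 / 2) * W1 y.1 (u1 + u2) * W2 y.2 u2

/-- The plus-channel W⁺ of the irregular kernel transform. -/
noncomputable def Wplus {Y1 Y2 : Type*} (W1 : Y1 → ZMod 2 → ℝ)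
    (W2 : Y2 → ZMod 2 → ℝ) : Y1 × Y2 × ZMod 2 → ZMod 2 → ℝ :=
  fun y u2 => (1 / 2) * W1 y.1 (y.2.2 + u2) * W2 y.2.1 u2

noncomputable def plg (t : ℝ) : ℝ := t * Real.logb 2 t

lemma sum_zmod2 (f : ZMod 2 → ℝ) : ∑ x : ZMod 2, f x = f 0 + f 1 := Fin.sum_univ_two f

lemma plg_mul {s t : ℝ} (hs : 0 ≤ s) (ht : 0 ≤ t) :
    plg (s * t) = s * plg t + t * plg s := by
  rcases eq_or_lt_of_le hs with hs0 | hs0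
  · simp [plg, ← hs0]
  rcases eq_or_lt_of_le ht with ht0 | ht0
  · simp [plg, ← ht0]
  · simp only [plg]
    rw [Real.logb_mul (ne_of_gt hs0) (ne_of_gt ht0)]
    ring

lemma key (a q : ℝ) (ha : 0 ≤ a) (hq : a ≠ 0 → 0 < q) :
    1/2*a*Real.logb 2 (a/q) = 1/2*a + plg (1/2*a) - 1/2*a*Real.logb 2 q := by
  rcases eq_or_lt_of_le ha with h0 | h0
  · simp [plg, ← h0]
  · have hq' := hq (ne_of_gt h0)
    have h2 : a / q = 2 * (1/2*a) / q := by ring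
    rw [h2, Real.logb_div (by positivity) (ne_of_gt hq'),
      Real.logb_mul (by norm_num) (by positivity),
      Real.logb_self_eq_one (by norm_num : (1:ℝ) < 2)]
    simp only [plg]; ring

noncomputable def capA {Y : Type*} [Fintype Y] (W : Y → ZMod 2 → ℝ) : ℝ :=
  ∑ y, ∑ x : ZMod 2, plg (1/2 * W y x)

noncomputable def capB {Y : Type*} [Fintype Y] (W : Y → ZMod 2 → ℝ) : ℝ :=
  ∑ y, plg (1/2 * (W y 0 + W y 1))

lemma symCap_eq {Y : Type*} [Fintype Y] (W : Y → ZMod 2 → ℝ) (h : IsBDMC W) :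
    symCap W = 1 + capA W - capB W := by
  obtain ⟨hpos, hsum⟩ := h
  have step : ∀ y, (∑ x : ZMod 2,
      (1 / 2) * W y x * Real.logb 2 (W y x / ((1 / 2) * (W y 0 + W y 1))))
      = 1/2 * (W y 0 + W y 1) + (∑ x : ZMod 2, plg (1/2 * W y x))
        - plg (1/2 * (W y 0 + W y 1)) := by
    intro y
    rw [sum_zmod2, sum_zmod2]
    have hq : ∀ x : ZMod 2, W y x ≠ 0 → 0 < (1/2) * (W y 0 + W y 1) := by
      intro x hx
      have hx' : 0 < W y 0 + W y 1 := by
        fin_cases x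
        · have := hpos y 1; nlinarith [lt_of_le_of_ne (hpos y 0) (Ne.symm hx)]
        · have := hpos y 0; nlinarith [lt_of_le_of_ne (hpos y 1) (Ne.symm hx)]
      positivity
    have k0 := key (W y 0) ((1/2) * (W y 0 + W y 1)) (hpos y 0) (hq 0)
    have k1 := key (W y 1) ((1/2) * (W y 0 + W y 1)) (hpos y 1) (hq 1)
    rw [k0, k1]
    simp only [plg]
    ring
  rw [symCap, Finset.sum_congr rfl (fun y _ => step y)]
  have h0 : ∑ y, (1:ℝ)/2 * (W y 0 + W y 1) = 1 := by
    rw [show (fun y => (1:ℝ)/2 * (W y 0 + W y 1)) = fun y => 1/2 * W y 0 + 1/2 * W y 1 from funext fun y => by ring]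
    rw [Finset.sum_add_distrib, ← Finset.mul_sum, ← Finset.mul_sum, hsum 0, hsum 1]
    norm_num
  rw [Finset.sum_sub_distrib, Finset.sum_add_distrib, h0]
  rfl

lemma sum_sum_plg_mul {A B : Type*} [Fintype A] [Fintype B]
    (f : A → ℝ) (g : B → ℝ) (hf : ∀ a, 0 ≤ f a) (hg : ∀ b, 0 ≤ g b) :
    ∑ a, ∑ b, plg (f a * g b)
      = (∑ b, g b) * (∑ a, plg (f a)) + (∑ a, f a) * (∑ b, plg (g b)) := by
  calc ∑ a, ∑ b, plg (f a * g b)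
      = ∑ a, ∑ b, (f a * plg (g b) + g b * plg (f a)) :=
        Finset.sum_congr rfl fun a _ => Finset.sum_congr rfl fun b _ => plg_mul (hf a) (hg b)
    _ = ∑ a, (f a * ∑ b, plg (g b) + (∑ b, g b) * plg (f a)) := by
        refine Finset.sum_congr rfl fun a _ => ?_
        rw [Finset.sum_add_distrib, ← Finset.mul_sum, ← Finset.sum_mul]
    _ = (∑ b, g b) * (∑ a, plg (f a)) + (∑ a, f a) * (∑ b, plg (g b)) := by
        rw [Finset.sum_add_distrib, ← Finset.sum_mul, ← Finset.mul_sum]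
        ring

lemma sum_sum_mul_add {A B : Type*} [Fintype A] [Fintype B]
    (a c : A → ℝ) (b d : B → ℝ) :
    ∑ x, ∑ y, (a x * b y + c x * d y)
      = (∑ x, a x) * (∑ y, b y) + (∑ x, c x) * (∑ y, d y) := by
  rw [Finset.sum_mul_sum, Finset.sum_mul_sum, ← Finset.sum_add_distrib]
  exact Finset.sum_congr rfl fun x _ => Finset.sum_add_distrib

lemma sum_shift (f : ZMod 2 → ℝ) (u2 : ZMod 2) :
    ∑ u1 : ZMod 2, f (u1 + u2) = ∑ x : ZMod 2, f x :=
  Fintype.sum_equiv (Equiv.addRight u2) _ _ (fun _ => rfl)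

lemma sum_half {Y : Type*} [Fintype Y] {W : Y → ZMod 2 → ℝ} (h : IsBDMC W) :
    ∑ y, (1:ℝ)/2 * (W y 0 + W y 1) = 1 := by
  rw [show (fun y => (1:ℝ)/2 * (W y 0 + W y 1)) = fun y => 1/2 * W y 0 + 1/2 * W y 1
    from funext fun y => by ring]
  rw [Finset.sum_add_distrib, ← Finset.mul_sum, ← Finset.mul_sum, h.2 0, h.2 1]
  norm_num

lemma bdmc_minus {Y1 Y2 : Type*} [Fintype Y1] [Fintype Y2]
    {W1 : Y1 → ZMod 2 → ℝ} {W2 : Y2 → ZMod 2 → ℝ}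
    (h1 : IsBDMC W1) (h2 : IsBDMC W2) : IsBDMC (Wminus W1 W2) := by
  constructor
  · intro y x
    refine Finset.sum_nonneg fun u2 _ => ?_
    have := h1.1 y.1 (x + u2); have := h2.1 y.2 u2; positivity
  · intro u1
    simp only [Wminus, sum_zmod2, Fintype.sum_prod_type]
    rw [sum_sum_mul_add (fun y1 => 1/2 * W1 y1 (u1+0)) (fun y1 => 1/2 * W1 y1 (u1+1))
      (fun y2 => W2 y2 0) (fun y2 => W2 y2 1), ← Finset.mul_sum, ← Finset.mul_sum,
      h1.2 _, h1.2 _, h2.2 0, h2.2 1]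
    norm_num

lemma bdmc_plus {Y1 Y2 : Type*} [Fintype Y1] [Fintype Y2]
    {W1 : Y1 → ZMod 2 → ℝ} {W2 : Y2 → ZMod 2 → ℝ}
    (h1 : IsBDMC W1) (h2 : IsBDMC W2) : IsBDMC (Wplus W1 W2) := by
  constructor
  · intro y x
    have ha := h1.1 y.1 (y.2.2 + x); have hb := h2.1 y.2.1 x
    simp only [Wplus]; positivity
  · intro u2
    simp only [Wplus, Fintype.sum_prod_type]
    have e1 : ∀ y1 y2, ∑ u1 : ZMod 2, 1/2 * W1 y1 (u1 + u2) * W2 y2 u2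
        = 1/2 * W1 y1 0 * W2 y2 u2 + 1/2 * W1 y1 1 * W2 y2 u2 := by
      intro y1 y2
      rw [sum_shift (fun x => 1/2 * W1 y1 x * W2 y2 u2) u2, sum_zmod2]
    rw [Finset.sum_congr rfl fun y1 _ => Finset.sum_congr rfl fun y2 _ => e1 y1 y2]
    rw [sum_sum_mul_add (fun y1 => 1/2 * W1 y1 0) (fun y1 => 1/2 * W1 y1 1)
      (fun y2 => W2 y2 u2) (fun y2 => W2 y2 u2), ← Finset.mul_sum, ← Finset.mul_sum,
      h1.2 0, h1.2 1, h2.2 u2]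
    norm_num

lemma sum_half2 {Y : Type*} [Fintype Y] {W : Y → ZMod 2 → ℝ} (h : IsBDMC W) :
    ∑ y, ∑ x : ZMod 2, (1:ℝ)/2 * W y x = 1 := by
  have e : ∀ y, ∑ x : ZMod 2, (1:ℝ)/2 * W y x = 1/2*(W y 0 + W y 1) := fun y => by
    rw [sum_zmod2]; ring
  rw [Finset.sum_congr rfl fun y _ => e y]; exact sum_half h

lemma four_sum_plg {A1 A2 B1 B2 : Type*} [Fintype A1] [Fintype A2] [Fintype B1] [Fintype B2]
    (f : A1 → A2 → ℝ) (g : B1 → B2 → ℝ)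
    (hf : ∀ a1 a2, 0 ≤ f a1 a2) (hg : ∀ b1 b2, 0 ≤ g b1 b2) :
    ∑ a1, ∑ a2, ∑ b1, ∑ b2, plg (f a1 a2 * g b1 b2)
      = (∑ b1, ∑ b2, g b1 b2) * (∑ a1, ∑ a2, plg (f a1 a2))
        + (∑ a1, ∑ a2, f a1 a2) * (∑ b1, ∑ b2, plg (g b1 b2)) := by
  have := sum_sum_plg_mul (fun p : A1 × A2 => f p.1 p.2) (fun q : B1 × B2 => g q.1 q.2)
    (fun p => hf p.1 p.2) (fun q => hg q.1 q.2)
  simpa [Fintype.sum_prod_type] using this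

lemma capB_minus {Y1 Y2 : Type*} [Fintype Y1] [Fintype Y2]
    {W1 : Y1 → ZMod 2 → ℝ} {W2 : Y2 → ZMod 2 → ℝ}
    (h1 : IsBDMC W1) (h2 : IsBDMC W2) :
    capB (Wminus W1 W2) = capB W1 + capB W2 := by
  have e : ∀ (y1 : Y1) (y2 : Y2), (1:ℝ)/2 * (Wminus W1 W2 (y1,y2) 0 + Wminus W1 W2 (y1,y2) 1)
      = (1/2 * (W1 y1 0 + W1 y1 1)) * (1/2 * (W2 y2 0 + W2 y2 1)) := by
    intro y1 y2
    simp only [Wminus, sum_zmod2]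
    rw [show ((0:ZMod 2)+0) = 0 by decide, show ((0:ZMod 2)+1) = 1 by decide,
        show ((1:ZMod 2)+0) = 1 by decide, show ((1:ZMod 2)+1) = 0 by decide]
    ring
  rw [capB, Fintype.sum_prod_type]
  rw [Finset.sum_congr rfl fun y1 _ => Finset.sum_congr rfl fun y2 _ =>
    congrArg plg (e y1 y2)]
  rw [sum_sum_plg_mul _ _ (fun y1 => by have := h1.1 y1 0; have := h1.1 y1 1; positivity)
      (fun y2 => by have := h2.1 y2 0; have := h2.1 y2 1; positivity),
    sum_half h1, sum_half h2]
  rw [capB, capB]; ring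

lemma capB_plus {Y1 Y2 : Type*} [Fintype Y1] [Fintype Y2]
    (W1 : Y1 → ZMod 2 → ℝ) (W2 : Y2 → ZMod 2 → ℝ) :
    capB (Wplus W1 W2) = capA (Wminus W1 W2) := by
  simp only [capB, capA, Fintype.sum_prod_type]
  refine Finset.sum_congr rfl fun y1 _ => Finset.sum_congr rfl fun y2 _ =>
    Finset.sum_congr rfl fun u1 _ => congrArg plg ?_
  simp only [Wplus, Wminus, sum_zmod2]

lemma capA_plus {Y1 Y2 : Type*} [Fintype Y1] [Fintype Y2]
    {W1 : Y1 → ZMod 2 → ℝ} {W2 : Y2 → ZMod 2 → ℝ}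
    (h1 : IsBDMC W1) (h2 : IsBDMC W2) :
    capA (Wplus W1 W2) = capA W1 + capA W2 := by
  have step1 : capA (Wplus W1 W2)
      = ∑ y1, ∑ x1 : ZMod 2, ∑ y2, ∑ u2 : ZMod 2,
          plg ((1/2 * W1 y1 x1) * (1/2 * W2 y2 u2)) := by
    simp only [capA, Wplus, Fintype.sum_prod_type]
    refine Finset.sum_congr rfl fun y1 _ => ?_
    have inner : ∀ y2 : Y2,
        (∑ u1 : ZMod 2, ∑ u2 : ZMod 2, plg (1/2*(1/2*W1 y1 (u1+u2)*W2 y2 u2)))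
        = ∑ x1 : ZMod 2, ∑ u2 : ZMod 2, plg (1/2*(1/2*W1 y1 x1*W2 y2 u2)) := by
      intro y2
      rw [Finset.sum_comm]
      rw [Finset.sum_congr rfl fun u2 _ =>
        sum_shift (fun a => plg (1/2*(1/2*W1 y1 a*W2 y2 u2))) u2]
      exact Finset.sum_comm
    rw [Finset.sum_congr rfl fun y2 _ => inner y2, Finset.sum_comm]
    exact Finset.sum_congr rfl fun x1 _ => Finset.sum_congr rfl fun y2 _ =>
      Finset.sum_congr rfl fun u2 _ => congrArg plg (by ring)
  rw [step1, four_sum_plg _ _ (fun y1 x1 => by have := h1.1 y1 x1; positivity)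
      (fun y2 u2 => by have := h2.1 y2 u2; positivity), sum_half2 h1, sum_half2 h2]
  rw [capA, capA]; ring

/-- I(W⁻) + I(W⁺) = I(W1) + I(W2). -/
theorem symCap_kernel_sum {Y1 Y2 : Type*} [Fintype Y1] [Fintype Y2]
    (W1 : Y1 → ZMod 2 → ℝ) (W2 : Y2 → ZMod 2 → ℝ)
    (h1 : IsBDMC W1) (h2 : IsBDMC W2) :
    symCap (Wminus W1 W2) + symCap (Wplus W1 W2) = symCap W1 + symCap W2 := by
  rw [symCap_eq _ h1, symCap_eq _ h2, symCap_eq _ (bdmc_minus h1 h2),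
    symCap_eq _ (bdmc_plus h1 h2), capB_plus, capA_plus h1 h2, capB_minus h1 h2]
  ring
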